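/- For every real b with 0 < b < 1 and every δ ∈ (0,1), Γ(b+δ)/Γ(b) < b^δ · Γ(1+δ). Consequently, for any C > 0 and θ > 0, the moment M_b = exp(−Cθ^δ · Γ(b+δ)/(Γ(1+δ)Γ(b))) of the conditional success probability in a Poisson bipolar network with p = 1 satisfies M_b > M₁^{b^δ}, where M₁ = exp(−Cθ^δ). -/

import Mathlib

open Real MeasureTheory Set intervalIntegral

private lemma gamma_beta (b δ : ℝ) (hb : 0 < b) (hδ : 0 < δ) :
    Real.Gamma b * Real.Gamma δ =
      Real.Gamma (b + δ) * ∫ t in Ioo (0:ℝ) 1, t ^ (b-1) * (1-t) ^ (δ-1) := by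
  have hC := Complex.Gamma_mul_Gamma_eq_betaIntegral (s := (b:ℂ)) (t := (δ:ℂ))
    (by simpa using hb) (by simpa using hδ)
  have hBeta : Complex.betaIntegral (b:ℂ) (δ:ℂ) =
      ((∫ t in Ioo (0:ℝ) 1, t ^ (b-1) * (1-t) ^ (δ-1) : ℝ) : ℂ) := by
    rw [Complex.betaIntegral, intervalIntegral.integral_of_le zero_le_one,
      MeasureTheory.integral_Ioc_eq_integral_Ioo]
    refine Eq.trans (setIntegral_congr_fun
      (g := fun x : ℝ => ((x ^ (b-1) * (1-x) ^ (δ-1) : ℝ) : ℂ))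
      measurableSet_Ioo fun x hx => ?_) _root_.integral_ofReal
    have hx0 : (0:ℝ) ≤ x := hx.1.le
    have hx1 : (0:ℝ) ≤ 1 - x := by linarith [hx.2]
    dsimp only
    rw [Complex.ofReal_mul, Complex.ofReal_cpow hx0, Complex.ofReal_cpow hx1]
    push_cast
    ring
  rw [hBeta] at hC
  have : ((Real.Gamma b * Real.Gamma δ : ℝ) : ℂ) =
      ((Real.Gamma (b + δ) * ∫ t in Ioo (0:ℝ) 1, t ^ (b-1) * (1-t) ^ (δ-1) : ℝ) : ℂ) := by
    push_cast
    rw [← Complex.Gamma_ofReal, ← Complex.Gamma_ofReal, ← Complex.Gamma_ofReal] at *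
    push_cast at hC ⊢
    exact hC
  exact_mod_cast this

private lemma one_sub_integral (δ : ℝ) (hδ0 : 0 < δ) (hδ1 : δ < 1) :
    (∫ y in Ioo (0:ℝ) 1, (1-y) ^ (δ-1)) = 1/δ := by
  rw [← MeasureTheory.integral_Ioc_eq_integral_Ioo,
    ← intervalIntegral.integral_of_le zero_le_one]
  have := intervalIntegral.integral_comp_sub_left (a := (0:ℝ)) (b := 1)
    (fun y => y ^ (δ-1)) 1
  simp only [sub_zero, sub_self] at this
  rw [this, integral_rpow (Or.inl (by linarith))]
  rw [Real.zero_rpow (by linarith), Real.one_rpow]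
  ring_nf


private lemma rpow_image (b : ℝ) (hb0 : 0 < b) (hb1 : b < 1) :
    (fun t : ℝ => t ^ b) '' Ioo 0 1 = Ioo 0 1 := by
  ext y
  constructor
  · rintro ⟨x, hx, rfl⟩
    exact ⟨Real.rpow_pos_of_pos hx.1 b, Real.rpow_lt_one hx.1.le hx.2 hb0⟩
  · intro hy
    refine ⟨y ^ (1/b), ⟨Real.rpow_pos_of_pos hy.1 _,
      Real.rpow_lt_one hy.1.le hy.2 (by positivity)⟩, ?_⟩
    show (y ^ (1/b)) ^ b = y
    rw [← Real.rpow_mul hy.1.le, one_div_mul_cancel hb0.ne', Real.rpow_one]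

private lemma rpow_deriv (b : ℝ) (hb0 : 0 < b) :
    ∀ x ∈ Ioo (0:ℝ) 1, HasDerivWithinAt (fun t : ℝ => t ^ b)
      (b * x ^ (b-1)) (Ioo 0 1) x :=
  fun x hx => (Real.hasDerivAt_rpow_const (Or.inl hx.1.ne')).hasDerivWithinAt

private lemma rpow_injOn (b : ℝ) (hb0 : 0 < b) :
    InjOn (fun t : ℝ => t ^ b) (Ioo 0 1) :=
  StrictMonoOn.injOn (fun x hx y _ hxy => Real.rpow_lt_rpow hx.1.le hxy hb0)

private lemma subst_integral (b δ : ℝ) (hb0 : 0 < b) (hb1 : b < 1)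
    (hδ0 : 0 < δ) (hδ1 : δ < 1) :
    (∫ t in Ioo (0:ℝ) 1, b * t ^ (b-1) * (1 - t ^ b) ^ (δ-1)) = 1/δ := by
  have h := integral_image_eq_integral_abs_deriv_smul measurableSet_Ioo
    (rpow_deriv b hb0) (rpow_injOn b hb0) (fun y => (1-y) ^ (δ-1))
  rw [rpow_image b hb0 hb1, one_sub_integral δ hδ0 hδ1] at h
  rw [h]
  refine setIntegral_congr_fun measurableSet_Ioo (fun x hx => ?_)
  have : (0:ℝ) < b * x ^ (b-1) := mul_pos hb0 (Real.rpow_pos_of_pos hx.1 _)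
  rw [smul_eq_mul, abs_of_pos this]

private lemma one_sub_integrable (δ : ℝ) (hδ0 : 0 < δ) (hδ1 : δ < 1) :
    IntegrableOn (fun y : ℝ => (1-y) ^ (δ-1)) (Ioo 0 1) := by
  have h : IntervalIntegrable (fun y : ℝ => y ^ (δ-1)) volume 0 1 :=
    intervalIntegrable_rpow' (by linarith)
  have h2 := (h.comp_sub_left 1).symm
  simp only [sub_zero, sub_self] at h2
  exact ((intervalIntegrable_iff_integrableOn_Ioo_of_le zero_le_one).mp h2)

private lemma subst_integrable (b δ : ℝ) (hb0 : 0 < b) (hb1 : b < 1)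
    (hδ0 : 0 < δ) (hδ1 : δ < 1) :
    IntegrableOn (fun t : ℝ => b * t ^ (b-1) * (1 - t ^ b) ^ (δ-1)) (Ioo 0 1) := by
  have h := (integrableOn_image_iff_integrableOn_abs_deriv_smul measurableSet_Ioo
    (rpow_deriv b hb0) (rpow_injOn b hb0) (fun y => (1-y) ^ (δ-1))).mp
    (by rw [rpow_image b hb0 hb1]; exact one_sub_integrable δ hδ0 hδ1)
  refine h.congr_fun (fun x hx => ?_) measurableSet_Ioo
  have : (0:ℝ) < b * x ^ (b-1) := mul_pos hb0 (Real.rpow_pos_of_pos hx.1 _)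
  dsimp only
  rw [smul_eq_mul, abs_of_pos this]

private lemma beta_integrable (b δ : ℝ) (hb0 : 0 < b) (hδ0 : 0 < δ) :
    IntegrableOn (fun t : ℝ => t ^ (b-1) * (1-t) ^ (δ-1)) (Ioc 0 1) := by
  have hC : IntervalIntegrable
      (fun x : ℝ => (x:ℂ) ^ ((b:ℂ)-1) * (1-(x:ℂ)) ^ ((δ:ℂ)-1)) volume 0 1 :=
    Complex.betaIntegral_convergent (by simpa using hb0) (by simpa using hδ0)
  have h1 : IntegrableOn
      (fun x : ℝ => (x:ℂ) ^ ((b:ℂ)-1) * (1-(x:ℂ)) ^ ((δ:ℂ)-1)) (Ioc 0 1) := hC.1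
  have h2 := h1.re
  refine IntegrableOn.congr_fun h2 (fun x hx => ?_) measurableSet_Ioc
  have hx0 : (0:ℝ) ≤ x := hx.1.le
  have hx1 : (0:ℝ) ≤ 1 - x := by linarith [hx.2]
  rw [show (1:ℂ) - (x:ℂ) = ((1-x : ℝ) : ℂ) by push_cast; ring,
    show ((b:ℂ)-1) = ((b-1 : ℝ) : ℂ) by push_cast; ring,
    show ((δ:ℂ)-1) = ((δ-1 : ℝ) : ℂ) by push_cast; ring,
    ← Complex.ofReal_cpow hx0, ← Complex.ofReal_cpow hx1, ← Complex.ofReal_mul]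
  simp

private lemma pointwise_lt (b δ : ℝ) (hb0 : 0 < b) (hb1 : b < 1)
    (hδ0 : 0 < δ) (hδ1 : δ < 1) :
    ∀ t ∈ Ioo (0:ℝ) 1,
      b ^ (-δ) * (b * t ^ (b-1) * (1 - t ^ b) ^ (δ-1)) <
        t ^ (b-1) * (1-t) ^ (δ-1) := by
  intro t ht
  have ht0 := ht.1
  have ht1 := ht.2
  -- Bernoulli: t ^ b < 1 + b * (t - 1)
  have hbern : t ^ b < 1 + b * (t - 1) := by
    have h := rpow_one_add_lt_one_add_mul_self (s := t - 1) (by linarith)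
      (by intro h; apply ht1.ne; linarith) hb0 hb1
    simpa using h
  have h1 : b * (1 - t) < 1 - t ^ b := by nlinarith
  have h2 : (0:ℝ) < 1 - t ^ b := by nlinarith
  have h3 : ((1 - t ^ b) / b) ^ (δ-1) < (1 - t) ^ (δ-1) :=
    Real.rpow_lt_rpow_of_neg (by linarith) ((lt_div_iff₀ hb0).mpr (by linarith))
      (by linarith)
  have e2 : ((1 - t ^ b) / b) ^ (δ-1) = (1 - t ^ b) ^ (δ-1) * b ^ (1-δ) := by
    rw [Real.div_rpow h2.le hb0.le, div_eq_mul_inv, ← Real.rpow_neg hb0.le, neg_sub]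
  have e1 : b ^ (-δ) * (b * t ^ (b-1) * (1 - t ^ b) ^ (δ-1)) =
      t ^ (b-1) * ((1 - t ^ b) ^ (δ-1) * b ^ (1-δ)) := by
    rw [show (1-δ) = -δ + 1 by ring, Real.rpow_add hb0, Real.rpow_one]
    ring
  rw [e1, ← e2]
  exact mul_lt_mul_of_pos_left h3 (Real.rpow_pos_of_pos ht0 _)

private lemma beta_lower (b δ : ℝ) (hb0 : 0 < b) (hb1 : b < 1)
    (hδ0 : 0 < δ) (hδ1 : δ < 1) :
    b ^ (-δ) * (1/δ) < ∫ t in Ioo (0:ℝ) 1, t ^ (b-1) * (1-t) ^ (δ-1) := by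
  set f : ℝ → ℝ := fun t => b ^ (-δ) * (b * t ^ (b-1) * (1 - t ^ b) ^ (δ-1)) with hf
  set g : ℝ → ℝ := fun t => t ^ (b-1) * (1-t) ^ (δ-1) with hg
  have hfi : IntervalIntegrable f volume 0 1 := by
    rw [intervalIntegrable_iff_integrableOn_Ioo_of_le zero_le_one]
    exact (subst_integrable b δ hb0 hb1 hδ0 hδ1).const_mul _
  have hgi : IntervalIntegrable g volume 0 1 := by
    rw [intervalIntegrable_iff_integrableOn_Ioc_of_le zero_le_one]
    exact beta_integrable b δ hb0 hδ0
  have hle : ∀ x ∈ Ioc (0:ℝ) 1, f x ≤ g x := by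
    intro x hx
    rcases eq_or_lt_of_le hx.2 with h | h
    · subst h
      simp only [hf, hg, Real.one_rpow, sub_self, Real.zero_rpow (by linarith : δ - 1 ≠ 0)]
      ring_nf
      exact le_refl _
    · exact (pointwise_lt b δ hb0 hb1 hδ0 hδ1 x ⟨hx.1, h⟩).le
  have hlt : (volume.restrict (Ioc (0:ℝ) 1)) {x | f x < g x} ≠ 0 := by
    intro h0
    rw [Measure.restrict_apply' measurableSet_Ioc] at h0
    have hsub : Ioo (0:ℝ) 1 ⊆ {x | f x < g x} ∩ Ioc 0 1 := fun x hx =>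
      ⟨pointwise_lt b δ hb0 hb1 hδ0 hδ1 x hx, Ioo_subset_Ioc_self hx⟩
    have := measure_mono_null hsub h0
    simp [Real.volume_Ioo] at this
  have key := intervalIntegral.integral_lt_integral_of_ae_le_of_measure_setOf_lt_ne_zero
    zero_le_one hfi hgi
    (((ae_restrict_iff' measurableSet_Ioc).mpr (Filter.Eventually.of_forall hle)))
    hlt
  have hfval : (∫ x in (0:ℝ)..1, f x) = b ^ (-δ) * (1/δ) := by
    rw [intervalIntegral.integral_of_le zero_le_one,
      MeasureTheory.integral_Ioc_eq_integral_Ioo, hf]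
    rw [MeasureTheory.integral_const_mul, subst_integral b δ hb0 hb1 hδ0 hδ1]
  have hgval : (∫ x in (0:ℝ)..1, g x) = ∫ t in Ioo (0:ℝ) 1, t ^ (b-1) * (1-t) ^ (δ-1) := by
    rw [intervalIntegral.integral_of_le zero_le_one,
      MeasureTheory.integral_Ioc_eq_integral_Ioo]
  rw [hfval, hgval] at key
  exact key

/-- For `0 < b < 1` and `δ ∈ (0,1)`: `Γ(b+δ)/Γ(b) < b^δ Γ(1+δ)`. Consequently, for any
`C > 0` and `θ > 0`, the moment `M_b = exp(-Cθ^δ Γ(b+δ)/(Γ(1+δ)Γ(b)))` satisfies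
`M_b > M₁^(b^δ)` with `M₁ = exp(-Cθ^δ)`. -/
theorem bipolar_moment_lower_bound (b δ : ℝ) (hb : b ∈ Set.Ioo (0:ℝ) 1)
    (hδ : δ ∈ Set.Ioo (0:ℝ) 1) :
    Real.Gamma (b + δ) / Real.Gamma b < b ^ δ * Real.Gamma (1 + δ) ∧
    ∀ C θ : ℝ, 0 < C → 0 < θ →
      Real.exp (-(C * θ ^ δ * (Real.Gamma (b + δ) / (Real.Gamma (1 + δ) * Real.Gamma b)))) >
        Real.exp (-(C * θ ^ δ)) ^ (b ^ δ) := by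
  obtain ⟨hb0, hb1⟩ := hb
  obtain ⟨hδ0, hδ1⟩ := hδ
  have hGb : 0 < Real.Gamma b := Real.Gamma_pos_of_pos hb0
  have hGδ : 0 < Real.Gamma δ := Real.Gamma_pos_of_pos hδ0
  have hGbδ : 0 < Real.Gamma (b + δ) := Real.Gamma_pos_of_pos (by linarith)
  have hG1δ : Real.Gamma (1 + δ) = δ * Real.Gamma δ := by
    rw [add_comm]; exact Real.Gamma_add_one hδ0.ne'
  have hG1δpos : 0 < Real.Gamma (1 + δ) := by rw [hG1δ]; positivity
  have hbd : 0 < b ^ δ := Real.rpow_pos_of_pos hb0 δ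
  have hbnd : 0 < b ^ (-δ) := Real.rpow_pos_of_pos hb0 _
  have hbb : b ^ δ * b ^ (-δ) = 1 := by
    rw [← Real.rpow_add hb0]; simp
  have main : Real.Gamma (b + δ) / Real.Gamma b < b ^ δ * Real.Gamma (1 + δ) := by
    have hbeta := gamma_beta b δ hb0 hδ0
    have hlow := beta_lower b δ hb0 hb1 hδ0 hδ1
    have h1 : Real.Gamma (b + δ) * (b ^ (-δ) * (1/δ)) < Real.Gamma b * Real.Gamma δ := by
      rw [hbeta]
      exact mul_lt_mul_of_pos_left hlow hGbδ
    rw [div_lt_iff₀ hGb, hG1δ]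
    have hδne : δ ≠ 0 := hδ0.ne'
    have hδδ : δ * (1/δ) = 1 := mul_one_div_cancel hδne
    have h2 := mul_lt_mul_of_pos_left h1 (mul_pos hbd hδ0)
    have e : b ^ δ * δ * (Real.Gamma (b + δ) * (b ^ (-δ) * (1/δ))) = Real.Gamma (b + δ) := by
      calc b ^ δ * δ * (Real.Gamma (b + δ) * (b ^ (-δ) * (1/δ)))
          = Real.Gamma (b + δ) * (b ^ δ * b ^ (-δ)) * (δ * (1/δ)) := by ring
        _ = Real.Gamma (b + δ) := by rw [hbb, hδδ]; ring
    have e2 : b ^ δ * δ * (Real.Gamma b * Real.Gamma δ)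
        = b ^ δ * (δ * Real.Gamma δ) * Real.Gamma b := by ring
    linarith [e ▸ e2 ▸ h2]
  refine ⟨main, fun C θ hC hθ => ?_⟩
  have hθδ : 0 < θ ^ δ := Real.rpow_pos_of_pos hθ δ
  have hq : Real.Gamma (b + δ) / (Real.Gamma (1 + δ) * Real.Gamma b) < b ^ δ := by
    rw [div_lt_iff₀ (by positivity)]
    rw [div_lt_iff₀ hGb] at main
    nlinarith
  rw [← Real.exp_mul]
  apply Real.exp_lt_exp.mpr
  have := mul_lt_mul_of_pos_left hq (mul_pos hC hθδ)
  nlinarith
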